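/- Let v, w : ℝ → ℂ be differentiable and let α ∈ ℂ, and suppose v′(x) = −w(x) − v(x)² and w′(x) = (2w(x) − x)·v(x) − α for all x ∈ ℝ. Then w is three times differentiable and satisfies w‴(x) + 6·w(x)·w′(x) − 2·w(x) − x·w′(x) = 0 for all x ∈ ℝ; moreover (2w(x) − x)·(w″(x) + 2w(x)² − x·w(x)) + α(α+1) + w′(x) − w′(x)² = 0 for all x ∈ ℝ. -/

import Mathlib

/-- The canonical equations for the Painlevé II Hamiltonian imply that `w` satisfies
`w''' + 6 w w' - 2 w - x w' = 0` and the equation `K₂`: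
`(2w - x)(w'' + 2w² - xw) + α(α+1) + w' - (w')² = 0`
(Proposition 6.2(ii) of the paper, with equation (6.8)). -/
theorem painleve_w_equation
    (v w : ℝ → ℂ) (α : ℂ)
    (hv : ∀ x : ℝ, HasDerivAt v (-w x - v x ^ 2) x)
    (hw : ∀ x : ℝ, HasDerivAt w ((2 * w x - x) * v x - α) x) :
    (∀ x : ℝ, HasDerivAt (deriv (deriv w))
        (-(6 * w x * deriv w x) + 2 * w x + (x : ℂ) * deriv w x) x) ∧
    (∀ x : ℝ, (2 * w x - x) * (deriv (deriv w) x + 2 * w x ^ 2 - (x : ℂ) * w x)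
        + α * (α + 1) + deriv w x - (deriv w x) ^ 2 = 0) := by
  set W1 : ℝ → ℂ := fun y => (2 * w y - y) * v y - α with hW1def
  set W2 : ℝ → ℂ := fun y => (2 * W1 y - 1) * v y + (2 * w y - y) * (-w y - v y ^ 2)
    with hW2def
  have hx : ∀ x : ℝ, HasDerivAt (fun y : ℝ => (y : ℂ)) 1 x := fun x => by
    exact Complex.ofRealCLM.hasDerivAt (x := x)
  have hdw : deriv w = W1 := funext fun x => (hw x).deriv
  have hW1 : ∀ x : ℝ, HasDerivAt W1 (W2 x) x := by
    intro x
    have := ((((hw x).const_mul 2).sub (hx x)).mul (hv x)).sub_const α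
    simpa [hW1def, hW2def] using this
  have hddw : deriv (deriv w) = W2 := by
    rw [hdw]; exact funext fun x => (hW1 x).deriv
  have hvder : ∀ x : ℝ, HasDerivAt (fun y => -w y - v y ^ 2)
      (-W1 x - 2 * v x * (-w x - v x ^ 2)) x := fun x => by
    have h := ((hw x).neg).sub ((hv x).mul (hv x))
    simp only [← pow_two] at h
    convert h using 1
    · rfl
    · rfl
    simp only [hW1def]
    ring
  have hW2 : ∀ x : ℝ, HasDerivAt W2
      (-(6 * w x * W1 x) + 2 * w x + (x : ℂ) * W1 x) x := by
    intro x
    have h1 : HasDerivAt (fun y => (2 * W1 y - 1) * v y)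
        ((2 * W2 x) * v x + (2 * W1 x - 1) * (-w x - v x ^ 2)) x :=
      (((hW1 x).const_mul 2).sub_const 1).mul (hv x)
    have h2 : HasDerivAt (fun y => (2 * w y - (y : ℂ)) * (-w y - v y ^ 2))
        ((2 * W1 x - 1) * (-w x - v x ^ 2)
          + (2 * w x - x) * (-W1 x - 2 * v x * (-w x - v x ^ 2))) x :=
      (((hw x).const_mul 2).sub (hx x)).mul (hvder x)
    have h3 := h1.add h2
    have heq : (2 * W2 x) * v x + (2 * W1 x - 1) * (-w x - v x ^ 2)
          + ((2 * W1 x - 1) * (-w x - v x ^ 2)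
          + (2 * w x - x) * (-W1 x - 2 * v x * (-w x - v x ^ 2)))
        = -(6 * w x * W1 x) + 2 * w x + (x : ℂ) * W1 x := by
      simp only [hW1def, hW2def]; ring
    rw [heq] at h3
    exact h3
  constructor
  · intro x
    rw [hddw, hdw]
    exact hW2 x
  · intro x
    rw [hddw, hdw]
    simp only [hW1def, hW2def]
    ring
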